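/- R is an integral domain, the canonical ring homomorphism ℤ[δ^{±1}, l^{±1}] → R is injective, and it induces an isomorphism of fields of fractions; that is, Frac(R) is isomorphic to the rational function field ℚ(l, δ) = Frac(ℤ[δ^{±1}, l^{±1}]). (This justifies the paper's use of ℚ(l, δ) as a field containing R in Theorem 5.3.) -/

import Mathlib

set_option maxHeartbeats 1000000
set_option synthInstance.maxHeartbeats 1000000

noncomputable section

/-- `ℤ[δ^{±1}, l^{±1}]`, realised as the group algebra `ℤ[ℤ × ℤ]`;
the monomial `δ^a l^b` corresponds to `(a, b)`. -/
abbrev BaseRing : Type := AddMonoidAlgebra ℤ (ℤ × ℤ)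

/-- `ℤ[δ^{±1}, l^{±1}][m] = ℤ[δ^{±1}, l^{±1}, m]`, realised as the monoid algebra
`ℤ[ℤ × ℤ × ℕ]`; the monomial `δ^a l^b m^c` corresponds to `(a, b, c)`. -/
abbrev PreR : Type := AddMonoidAlgebra ℤ (ℤ × ℤ × ℕ)

/-- The element `δ`. -/
def del : PreR := AddMonoidAlgebra.single ((1 : ℤ), (0 : ℤ), (0 : ℕ)) 1

/-- The element `l`. -/
def ell : PreR := AddMonoidAlgebra.single ((0 : ℤ), (1 : ℤ), (0 : ℕ)) 1

/-- The element `l⁻¹`. -/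
def ellInv : PreR := AddMonoidAlgebra.single ((0 : ℤ), (-1 : ℤ), (0 : ℕ)) 1

/-- The element `m`. -/
def mvar : PreR := AddMonoidAlgebra.single ((0 : ℤ), (0 : ℤ), (1 : ℕ)) 1

/-- The principal ideal of `ℤ[δ^{±1}, l^{±1}, m]` generated by the defining relation
`(1−δ)·m − l + l⁻¹`. -/
def RIdeal : Ideal PreR := Ideal.span {(1 - del) * mvar - ell + ellInv}

/-- The ring `R = ℤ[δ^{±1}, l^{±1}, m] / ((1−δ)m − l + l⁻¹)`. -/
abbrev RBMW : Type := PreR ⧸ RIdeal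

/-- The inclusion `ℤ[δ^{±1}, l^{±1}] → ℤ[δ^{±1}, l^{±1}, m]`, `(a,b) ↦ (a,b,0)`. -/
def baseToPre : BaseRing →+* PreR :=
  AddMonoidAlgebra.mapDomainRingHom ℤ
    (AddMonoidHom.prodMap (AddMonoidHom.id ℤ) (AddMonoidHom.inl ℤ ℕ))

/-- The canonical ring homomorphism `ℤ[δ^{±1}, l^{±1}] → R`, the composite of the
inclusion into the polynomial ring (in `m`) with the quotient map. -/
def canMap : BaseRing →+* RBMW := (Ideal.Quotient.mk RIdeal).comp baseToPre

/-! ### Auxiliary material -/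

open AddMonoidAlgebra

instance : IsDomain PreR := NoZeroDivisors.to_isDomain _
instance : IsDomain BaseRing := NoZeroDivisors.to_isDomain _

/-- `ℤ[l^{±1}, m]`, the target of the evaluation `δ ↦ 1`. -/
abbrev CRing : Type := AddMonoidAlgebra ℤ (ℤ × ℕ)

instance : IsDomain CRing := NoZeroDivisors.to_isDomain _

/-- `δ` in the base ring. -/
def delB : BaseRing := AddMonoidAlgebra.single ((1 : ℤ), (0 : ℤ)) 1
/-- `l` in the base ring. -/
def ellB : BaseRing := AddMonoidAlgebra.single ((0 : ℤ), (1 : ℤ)) 1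
/-- `l⁻¹` in the base ring. -/
def ellInvB : BaseRing := AddMonoidAlgebra.single ((0 : ℤ), (-1 : ℤ)) 1

lemma baseToPre_single (a b : ℤ) (x : ℤ) :
    baseToPre (AddMonoidAlgebra.single (a, b) x) =
      AddMonoidAlgebra.single (a, b, (0 : ℕ)) x := by
  simp [baseToPre, AddMonoidAlgebra.mapDomainRingHom_apply, Finsupp.mapDomain_single]

lemma baseToPre_delB : baseToPre delB = del := by
  simpa [delB, del] using baseToPre_single 1 0 1

lemma baseToPre_ellB : baseToPre ellB = ell := by
  simpa [ellB, ell] using baseToPre_single 0 1 1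

lemma baseToPre_ellInvB : baseToPre ellInvB = ellInv := by
  simpa [ellInvB, ellInv] using baseToPre_single 0 (-1) 1

lemma one_sub_del_ne : (1 - del : PreR) ≠ 0 := by
  intro h
  have h2 : (1 : PreR) = del := sub_eq_zero.mp h
  rw [AddMonoidAlgebra.one_def, del] at h2
  have := AddMonoidAlgebra.single_inj.mp h2
  simp [Prod.ext_iff] at this

lemma delB_ne : (delB : BaseRing) ≠ 0 := by
  simp [delB, AddMonoidAlgebra.single_eq_zero]

lemma ellB_ne : (ellB : BaseRing) ≠ 0 := by
  simp [ellB, AddMonoidAlgebra.single_eq_zero]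

lemma one_sub_delB_ne : (1 - delB : BaseRing) ≠ 0 := by
  intro h
  have h2 : (1 : BaseRing) = delB := sub_eq_zero.mp h
  rw [AddMonoidAlgebra.one_def, delB] at h2
  have := AddMonoidAlgebra.single_inj.mp h2
  simp [Prod.ext_iff] at this

lemma delB_mul_inv : delB * AddMonoidAlgebra.single ((-1 : ℤ), (0 : ℤ)) (1 : ℤ) = 1 := by
  rw [delB, AddMonoidAlgebra.single_mul_single]
  simp [AddMonoidAlgebra.one_def, Prod.ext_iff]
  rfl

lemma ellB_mul_ellInvB : ellB * ellInvB = 1 := by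
  rw [ellB, ellInvB, AddMonoidAlgebra.single_mul_single]
  simp [AddMonoidAlgebra.one_def, Prod.ext_iff]
  rfl

/-! ### The evaluation `δ ↦ 1` and the kernel of `PreR → CRing` -/

/-- Evaluation `δ ↦ 1 : PreR → CRing`. -/
def evC : PreR →+* CRing :=
  AddMonoidAlgebra.mapDomainRingHom ℤ (AddMonoidHom.snd ℤ (ℤ × ℕ))

/-- Section `CRing → PreR`. -/
def secC : CRing →+* PreR :=
  AddMonoidAlgebra.mapDomainRingHom ℤ (AddMonoidHom.inr ℤ (ℤ × ℕ))

lemma evC_single (a b : ℤ) (c : ℕ) (x : ℤ) :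
    evC (AddMonoidAlgebra.single (a, b, c) x) = AddMonoidAlgebra.single (b, c) x := by
  simp [evC, AddMonoidAlgebra.mapDomainRingHom_apply, Finsupp.mapDomain_single]

lemma secC_single (b : ℤ) (c : ℕ) (x : ℤ) :
    secC (AddMonoidAlgebra.single (b, c) x) = AddMonoidAlgebra.single ((0 : ℤ), b, c) x := by
  simp [secC, AddMonoidAlgebra.mapDomainRingHom_apply, Finsupp.mapDomain_single]

lemma del_zpow_mem (a : ℤ) :
    (AddMonoidAlgebra.single ((a : ℤ), (0 : ℤ), (0 : ℕ)) (1 : ℤ) - 1 : PreR) ∈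
      Ideal.span {(1 : PreR) - del} := by
  have hgen : (del - 1 : PreR) ∈ Ideal.span {(1 : PreR) - del} := by
    have h : (del - 1 : PreR) = -(1 - del) := by ring
    rw [h]
    exact neg_mem (Ideal.mem_span_singleton_self _)
  induction a using Int.induction_on with
  | zero => simp [AddMonoidAlgebra.one_def, Prod.mk_zero_zero]
  | succ a ih =>
      have hmul : del * AddMonoidAlgebra.single ((a : ℤ), (0 : ℤ), (0 : ℕ)) (1 : ℤ)
          = AddMonoidAlgebra.single ((a + 1 : ℤ), (0 : ℤ), (0 : ℕ)) (1 : ℤ) := by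
        rw [del, AddMonoidAlgebra.single_mul_single]
        simp [add_comm]
      have key : (AddMonoidAlgebra.single ((a + 1 : ℤ), (0 : ℤ), (0 : ℕ)) (1 : ℤ) - 1 : PreR)
          = del * (AddMonoidAlgebra.single ((a : ℤ), (0 : ℤ), (0 : ℕ)) (1 : ℤ) - 1)
            + (del - 1) := by
        rw [mul_sub, hmul]; ring
      rw [key]
      exact add_mem (Ideal.mul_mem_left _ _ ih) hgen
  | pred a ih =>
      set dinv : PreR := AddMonoidAlgebra.single ((-1 : ℤ), (0 : ℤ), (0 : ℕ)) 1 with hdinv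
      have hdinv1 : dinv * del = 1 := by
        rw [hdinv, del, AddMonoidAlgebra.single_mul_single]
        simp [AddMonoidAlgebra.one_def, Prod.ext_iff]
        rfl
      have hmem : (dinv - 1 : PreR) ∈ Ideal.span {(1 : PreR) - del} := by
        have h : (dinv - 1 : PreR) = dinv * (1 - del) := by
          rw [mul_sub, hdinv1, mul_one]
        rw [h]
        exact Ideal.mul_mem_left _ _ (Ideal.mem_span_singleton_self _)
      have hmul : dinv * AddMonoidAlgebra.single ((-(a : ℤ) : ℤ), (0 : ℤ), (0 : ℕ)) (1 : ℤ)
          = AddMonoidAlgebra.single ((-(a : ℤ) - 1 : ℤ), (0 : ℤ), (0 : ℕ)) (1 : ℤ) := by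
        rw [hdinv, AddMonoidAlgebra.single_mul_single]
        norm_num [Prod.ext_iff]
        ring
      have key : (AddMonoidAlgebra.single ((-(a : ℤ) - 1 : ℤ), (0 : ℤ), (0 : ℕ)) (1 : ℤ) - 1 : PreR)
          = dinv * (AddMonoidAlgebra.single ((-(a : ℤ) : ℤ), (0 : ℤ), (0 : ℕ)) (1 : ℤ) - 1)
            + (dinv - 1) := by
        rw [mul_sub, hmul]; ring
      rw [key]
      exact add_mem (Ideal.mul_mem_left _ _ ih) hmem

lemma sub_sec_ev_mem (p : PreR) : p - secC (evC p) ∈ Ideal.span {(1 : PreR) - del} := by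
  induction p using AddMonoidAlgebra.induction_on with
  | of g =>
      obtain ⟨a, b, c⟩ := g
      simp only [AddMonoidAlgebra.of_apply, toAdd_ofAdd]
      rw [evC_single, secC_single]
      have key : (AddMonoidAlgebra.single ((a : ℤ), b, c) (1 : ℤ)
            - AddMonoidAlgebra.single ((0 : ℤ), b, c) (1 : ℤ) : PreR)
          = (AddMonoidAlgebra.single ((a : ℤ), (0 : ℤ), (0 : ℕ)) (1 : ℤ) - 1)
            * AddMonoidAlgebra.single ((0 : ℤ), b, c) (1 : ℤ) := by
        rw [sub_mul, one_mul, AddMonoidAlgebra.single_mul_single]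
        norm_num
      rw [key]
      exact Ideal.mul_mem_right _ _ (del_zpow_mem a)
  | add f g hf hg =>
      have h : (f + g) - secC (evC (f + g)) = (f - secC (evC f)) + (g - secC (evC g)) := by
        rw [map_add, map_add]; ring
      rw [h]; exact add_mem hf hg
  | smul r f hf =>
      have h : (r • f) - secC (evC (r • f)) = r • (f - secC (evC f)) := by
        rw [map_zsmul, map_zsmul, smul_sub]
      rw [h]
      exact zsmul_mem hf r

lemma kernel_evC {p : PreR} (hp : evC p = 0) : p ∈ Ideal.span {(1 : PreR) - del} := by
  have h := sub_sec_ev_mem p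
  rwa [hp, map_zero, sub_zero] at h

/-! ### Pseudo-division modulo `RIdeal` -/

lemma gen_mem : ((1 - del) * mvar - ell + ellInv : PreR) ∈ RIdeal :=
  Ideal.mem_span_singleton_self _

lemma key_rel :
    Ideal.Quotient.mk RIdeal ((1 - del) * mvar) = Ideal.Quotient.mk RIdeal (ell - ellInv) := by
  rw [Ideal.Quotient.eq]
  have h : ((1 - del) * mvar - (ell - ellInv) : PreR) = (1 - del) * mvar - ell + ellInv := by ring
  rw [h]; exact gen_mem

lemma mvar_pow (c : ℕ) :
    (mvar ^ c : PreR) = AddMonoidAlgebra.single ((0 : ℤ), (0 : ℤ), c) 1 := by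
  rw [mvar, AddMonoidAlgebra.single_pow]
  simp [Prod.smul_mk]

lemma canMap_one_sub_delB :
    canMap (1 - delB) = Ideal.Quotient.mk RIdeal (1 - del) := by
  simp [canMap, map_sub, map_one, baseToPre_delB]

lemma pseudo (p : PreR) :
    ∃ (N : ℕ) (r : BaseRing),
      Ideal.Quotient.mk RIdeal ((1 - del) ^ N * p) = canMap r := by
  induction p using AddMonoidAlgebra.induction_on with
  | of g =>
      obtain ⟨a, b, c⟩ := g
      simp only [AddMonoidAlgebra.of_apply, toAdd_ofAdd]
      refine ⟨c, AddMonoidAlgebra.single (a, b) 1 * (ellB - ellInvB) ^ c, ?_⟩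
      have hsplit : (AddMonoidAlgebra.single ((a : ℤ), b, c) (1 : ℤ) : PreR)
          = AddMonoidAlgebra.single ((a : ℤ), b, (0 : ℕ)) 1 * mvar ^ c := by
        rw [mvar_pow, AddMonoidAlgebra.single_mul_single]
        norm_num
      have expand : ((1 - del) ^ c * AddMonoidAlgebra.single ((a : ℤ), b, c) (1 : ℤ) : PreR)
          = AddMonoidAlgebra.single ((a : ℤ), b, (0 : ℕ)) 1 * ((1 - del) * mvar) ^ c := by
        rw [hsplit, mul_pow]; ring
      rw [expand, map_mul, map_pow, key_rel]
      have rhs : canMap (AddMonoidAlgebra.single (a, b) 1 * (ellB - ellInvB) ^ c)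
          = Ideal.Quotient.mk RIdeal (AddMonoidAlgebra.single ((a : ℤ), b, (0 : ℕ)) 1)
            * (Ideal.Quotient.mk RIdeal (ell - ellInv)) ^ c := by
        simp only [canMap, RingHom.comp_apply, map_mul, map_pow, map_sub,
          baseToPre_ellB, baseToPre_ellInvB, baseToPre_single]
      rw [rhs]
  | add f g hf hg =>
      obtain ⟨N₁, r₁, h₁⟩ := hf
      obtain ⟨N₂, r₂, h₂⟩ := hg
      refine ⟨N₁ + N₂, (1 - delB) ^ N₂ * r₁ + (1 - delB) ^ N₁ * r₂, ?_⟩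
      have expand : ((1 - del) ^ (N₁ + N₂) * (f + g) : PreR)
          = (1 - del) ^ N₂ * ((1 - del) ^ N₁ * f) + (1 - del) ^ N₁ * ((1 - del) ^ N₂ * g) := by
        ring
      rw [expand, map_add, map_mul, h₁, map_mul, h₂]
      simp only [map_add, map_mul, map_pow, canMap_one_sub_delB]
  | smul r f hf =>
      obtain ⟨N, r₁, h₁⟩ := hf
      refine ⟨N, r • r₁, ?_⟩
      have expand : ((1 - del) ^ N * (r • f) : PreR) = r • ((1 - del) ^ N * f) := by
        rw [mul_smul_comm]
      rw [expand, map_zsmul, h₁, map_zsmul]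

/-! ### Regularity of `1 - δ` modulo `RIdeal` -/

lemma evC_del : evC del = 1 := by
  rw [del, evC_single, show ((0 : ℤ), (0 : ℕ)) = (0 : ℤ × ℕ) from rfl,
    ← AddMonoidAlgebra.one_def]

lemma evC_f : evC ((1 - del) * mvar - ell + ellInv)
    = AddMonoidAlgebra.single ((-1 : ℤ), (0 : ℕ)) 1
      - AddMonoidAlgebra.single ((1 : ℤ), (0 : ℕ)) 1 := by
  have h2 : evC ell = AddMonoidAlgebra.single ((1 : ℤ), (0 : ℕ)) 1 := by
    rw [ell, evC_single]
  have h3 : evC ellInv = AddMonoidAlgebra.single ((-1 : ℤ), (0 : ℕ)) 1 := by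
    rw [ellInv, evC_single]
  rw [map_add, map_sub, map_mul, map_sub, map_one, evC_del, h2, h3]
  ring

lemma evC_f_ne : evC ((1 - del) * mvar - ell + ellInv) ≠ 0 := by
  rw [evC_f]
  intro h
  have h2 : (AddMonoidAlgebra.single ((-1 : ℤ), (0 : ℕ)) 1 : CRing)
      = AddMonoidAlgebra.single ((1 : ℤ), (0 : ℕ)) 1 := sub_eq_zero.mp h
  have := AddMonoidAlgebra.single_inj.mp h2
  simp [Prod.ext_iff] at this

lemma regular_one_sub_del {q : PreR} (hq : (1 - del) * q ∈ RIdeal) : q ∈ RIdeal := by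
  rw [RIdeal, Ideal.mem_span_singleton] at hq
  obtain ⟨h, hh⟩ := hq
  have hev : evC ((1 - del) * mvar - ell + ellInv) * evC h = 0 := by
    rw [← map_mul, ← hh, map_mul]
    have h0 : evC (1 - del) = 0 := by
      rw [map_sub, map_one, evC_del, sub_self]
    rw [h0, zero_mul]
  have hh0 : evC h = 0 := by
    rcases mul_eq_zero.mp hev with h' | h'
    · exact absurd h' evC_f_ne
    · exact h'
  obtain ⟨h', hh'⟩ := Ideal.mem_span_singleton.mp (kernel_evC hh0)
  have heq : (1 - del) * q = (1 - del) * (((1 - del) * mvar - ell + ellInv) * h') := by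
    rw [hh, hh']; ring
  have hq' : q = ((1 - del) * mvar - ell + ellInv) * h' :=
    mul_left_cancel₀ one_sub_del_ne heq
  rw [RIdeal, hq']
  exact Ideal.mul_mem_right _ _ (Ideal.mem_span_singleton_self _)

lemma regular_pow {q : PreR} (N : ℕ) (hq : (1 - del) ^ N * q ∈ RIdeal) : q ∈ RIdeal := by
  induction N generalizing q with
  | zero => simpa using hq
  | succ n ih =>
      have h : (1 - del) ^ n * ((1 - del) * q) ∈ RIdeal := by
        have e : ((1 - del) ^ n * ((1 - del) * q) : PreR) = (1 - del) ^ (n + 1) * q := by ring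
        rw [e]; exact hq
      exact regular_one_sub_del (ih h)

/-! ### The map `φ : PreR → Frac(BaseRing)` -/

/-- Abbreviation for the fraction field of the base ring. -/
abbrev FRB : Type := FractionRing BaseRing

/-- The canonical map into the fraction field. -/
def aMap : BaseRing →+* FRB := algebraMap BaseRing FRB

lemma aMap_inj : Function.Injective aMap := IsFractionRing.injective BaseRing FRB

/-- image of δ -/
def dk : FRB := aMap delB
/-- image of l -/
def lk : FRB := aMap ellB
/-- image of `(l - l⁻¹)/(1 - δ)`. -/
def tk : FRB := aMap (ellB - ellInvB) / aMap (1 - delB)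

lemma dk_ne : dk ≠ 0 := by
  intro h
  apply delB_ne
  apply aMap_inj
  rw [map_zero]
  exact h

lemma lk_ne : lk ≠ 0 := by
  intro h
  apply ellB_ne
  apply aMap_inj
  rw [map_zero]
  exact h

lemma one_sub_dk_ne : aMap (1 - delB) ≠ 0 := by
  intro h
  apply one_sub_delB_ne
  apply aMap_inj
  rw [map_zero]
  exact h

lemma aMap_ellInvB : aMap ellInvB = lk⁻¹ := by
  have h1 : lk * aMap ellInvB = 1 := by
    rw [lk, ← map_mul, ellB_mul_ellInvB, map_one]
  exact (inv_eq_of_mul_eq_one_right h1).symm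

/-- The monoid homomorphism underlying `φ`. -/
def Fmon : Multiplicative (ℤ × ℤ × ℕ) →* FRB where
  toFun g := dk ^ (Multiplicative.toAdd g).1 * lk ^ (Multiplicative.toAdd g).2.1
      * tk ^ (Multiplicative.toAdd g).2.2
  map_one' := by simp
  map_mul' x y := by
    simp only [toAdd_mul, Prod.fst_add, Prod.snd_add,
      zpow_add₀ dk_ne, zpow_add₀ lk_ne, pow_add]
    ring

/-- The homomorphism `φ : PreR → Frac(BaseRing)`, `δ ↦ δ, l ↦ l, m ↦ (l - l⁻¹)/(1 - δ)`. -/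
def phi : PreR →+* FRB := ((AddMonoidAlgebra.lift ℤ FRB (ℤ × ℤ × ℕ)) Fmon).toRingHom

lemma phi_single (a b : ℤ) (c : ℕ) (x : ℤ) :
    phi (AddMonoidAlgebra.single (a, b, c) x) = (x : FRB) * (dk ^ a * lk ^ b * tk ^ c) := by
  rw [phi]
  have h := AddMonoidAlgebra.lift_single (R := ℤ) (A := FRB) Fmon (a, b, c) x
  simp only [AlgHom.toRingHom_eq_coe, RingHom.coe_coe]
  rw [h]
  simp [Fmon, zsmul_eq_mul]

lemma phi_del : phi del = dk := by
  rw [del, phi_single]; simp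

lemma phi_ell : phi ell = lk := by
  rw [ell, phi_single]; simp

lemma phi_ellInv : phi ellInv = lk⁻¹ := by
  rw [ellInv, phi_single]; simp

lemma phi_mvar : phi mvar = tk := by
  rw [mvar, phi_single]; simp

lemma phi_f : phi ((1 - del) * mvar - ell + ellInv) = 0 := by
  rw [map_add, map_sub, map_mul, map_sub, map_one, phi_del, phi_ell, phi_ellInv, phi_mvar]
  have key : (1 - dk) * tk = lk - lk⁻¹ := by
    have h1 : aMap (1 - delB) = 1 - dk := by rw [map_sub, map_one, dk]
    have h2 : aMap (ellB - ellInvB) = lk - lk⁻¹ := by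
      rw [map_sub, aMap_ellInvB]; rfl
    rw [tk, h1, h2, mul_div_cancel₀]
    rw [← h1]; exact one_sub_dk_ne
  rw [key]; ring

lemma aMap_delB_zpow (a : ℤ) :
    aMap (AddMonoidAlgebra.single ((a : ℤ), (0 : ℤ)) (1 : ℤ)) = dk ^ a := by
  induction a using Int.induction_on with
  | zero => rw [show ((0 : ℤ), (0 : ℤ)) = (0 : ℤ × ℤ) from rfl, ← AddMonoidAlgebra.one_def,
      map_one, zpow_zero]
  | succ a ih =>
      have h : (AddMonoidAlgebra.single ((a + 1 : ℤ), (0 : ℤ)) (1 : ℤ) : BaseRing)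
          = AddMonoidAlgebra.single ((a : ℤ), (0 : ℤ)) 1 * delB := by
        rw [delB, AddMonoidAlgebra.single_mul_single]; norm_num
      rw [h, map_mul, ih, zpow_add_one₀ dk_ne, dk]
  | pred a ih =>
      have hinv : aMap (AddMonoidAlgebra.single ((-1 : ℤ), (0 : ℤ)) (1 : ℤ)) = dk⁻¹ := by
        have h1 : dk * aMap (AddMonoidAlgebra.single ((-1 : ℤ), (0 : ℤ)) (1 : ℤ)) = 1 := by
          rw [dk, ← map_mul, delB_mul_inv, map_one]
        exact (inv_eq_of_mul_eq_one_right h1).symm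
      have h : (AddMonoidAlgebra.single ((-(a : ℤ) - 1 : ℤ), (0 : ℤ)) (1 : ℤ) : BaseRing)
          = AddMonoidAlgebra.single ((-(a : ℤ) : ℤ), (0 : ℤ)) 1
            * AddMonoidAlgebra.single ((-1 : ℤ), (0 : ℤ)) 1 := by
        rw [show (-(a : ℤ) - 1 : ℤ) = -(a : ℤ) + -1 by ring,
          AddMonoidAlgebra.single_mul_single]; norm_num
      rw [h, map_mul, ih, hinv, zpow_sub_one₀ dk_ne]

lemma aMap_ellB_zpow (b : ℤ) :
    aMap (AddMonoidAlgebra.single ((0 : ℤ), (b : ℤ)) (1 : ℤ)) = lk ^ b := by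
  induction b using Int.induction_on with
  | zero => rw [show ((0 : ℤ), (0 : ℤ)) = (0 : ℤ × ℤ) from rfl, ← AddMonoidAlgebra.one_def,
      map_one, zpow_zero]
  | succ b ih =>
      have h : (AddMonoidAlgebra.single ((0 : ℤ), (b + 1 : ℤ)) (1 : ℤ) : BaseRing)
          = AddMonoidAlgebra.single ((0 : ℤ), (b : ℤ)) 1 * ellB := by
        rw [ellB, AddMonoidAlgebra.single_mul_single]; norm_num
      rw [h, map_mul, ih, zpow_add_one₀ lk_ne, lk]
  | pred b ih =>
      have h : (AddMonoidAlgebra.single ((0 : ℤ), (-(b : ℤ) - 1 : ℤ)) (1 : ℤ) : BaseRing)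
          = AddMonoidAlgebra.single ((0 : ℤ), (-(b : ℤ) : ℤ)) 1 * ellInvB := by
        rw [show (-(b : ℤ) - 1 : ℤ) = -(b : ℤ) + -1 by ring, ellInvB,
          AddMonoidAlgebra.single_mul_single]; norm_num
      rw [h, map_mul, ih, aMap_ellInvB, zpow_sub_one₀ lk_ne]

lemma phi_baseToPre (r : BaseRing) : phi (baseToPre r) = aMap r := by
  induction r using AddMonoidAlgebra.induction_on with
  | of g =>
      obtain ⟨a, b⟩ := g
      simp only [AddMonoidAlgebra.of_apply, toAdd_ofAdd]
      rw [baseToPre_single, phi_single]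
      have hsplit : (AddMonoidAlgebra.single ((a : ℤ), (b : ℤ)) (1 : ℤ) : BaseRing)
          = AddMonoidAlgebra.single ((a : ℤ), (0 : ℤ)) 1
            * AddMonoidAlgebra.single ((0 : ℤ), (b : ℤ)) 1 := by
        rw [AddMonoidAlgebra.single_mul_single]; norm_num
      rw [hsplit, map_mul, aMap_delB_zpow, aMap_ellB_zpow]
      simp
  | add f g hf hg => rw [map_add, map_add, hf, hg, map_add]
  | smul r f hf => simp only [map_zsmul]; rw [hf]

/-! ### Assembling the proof -/

lemma phi_vanishes : ∀ p ∈ RIdeal, phi p = 0 := by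
  intro p hp
  rw [RIdeal, Ideal.mem_span_singleton] at hp
  obtain ⟨c, rfl⟩ := hp
  rw [map_mul, phi_f, zero_mul]

/-- The induced homomorphism `R → Frac(BaseRing)`. -/
def phiBar : RBMW →+* FRB := Ideal.Quotient.lift RIdeal phi phi_vanishes

lemma phiBar_mk (p : PreR) : phiBar (Ideal.Quotient.mk RIdeal p) = phi p := rfl

lemma phiBar_canMap (r : BaseRing) : phiBar (canMap r) = aMap r := by
  rw [canMap, RingHom.comp_apply, phiBar_mk, phi_baseToPre]

lemma ker_phi {p : PreR} (hp : phi p = 0) : p ∈ RIdeal := by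
  obtain ⟨N, r, hNr⟩ := pseudo p
  have h0 : aMap r = 0 := by
    have h := congrArg phiBar hNr
    rw [phiBar_mk, phiBar_canMap, map_mul, map_pow, map_sub, map_one, phi_del, hp,
      mul_zero] at h
    exact h.symm
  have hr : r = 0 := aMap_inj (by rw [h0, map_zero])
  rw [hr, map_zero] at hNr
  have hmem : (1 - del) ^ N * p ∈ RIdeal := by
    rwa [← Ideal.Quotient.eq_zero_iff_mem]
  exact regular_pow N hmem

lemma phiBar_inj : Function.Injective phiBar := by
  rw [injective_iff_map_eq_zero]
  intro x hx
  obtain ⟨p, rfl⟩ := Ideal.Quotient.mk_surjective (I := RIdeal) x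
  rw [phiBar_mk] at hx
  rw [Ideal.Quotient.eq_zero_iff_mem]
  exact ker_phi hx

lemma rbmw_domain : IsDomain RBMW := phiBar_inj.isDomain phiBar

lemma canMap_inj : Function.Injective canMap := by
  have h : Function.Injective (phiBar ∘ canMap) := by
    have he : phiBar ∘ canMap = aMap := funext phiBar_canMap
    rw [he]; exact aMap_inj
  exact Function.Injective.of_comp h

/-- `R` is an integral domain, the canonical ring homomorphism
`ℤ[δ^{±1}, l^{±1}] → R` is injective, and it induces an isomorphism of fields of
fractions `Frac(R) ≅ ℚ(l, δ) = Frac(ℤ[δ^{±1}, l^{±1}])`, i.e. there is a ring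
isomorphism between the two fraction fields compatible with the canonical maps. -/
theorem rbmw_isDomain_and_fractionField :
    IsDomain RBMW ∧ Function.Injective canMap ∧
    ∃ e : FractionRing RBMW ≃+* FractionRing BaseRing,
      ∀ a : BaseRing,
        e (algebraMap RBMW (FractionRing RBMW) (canMap a)) =
          algebraMap BaseRing (FractionRing BaseRing) a := by
  haveI hdom : IsDomain RBMW := rbmw_domain
  refine ⟨hdom, canMap_inj, ?_⟩
  letI : Algebra RBMW FRB := phiBar.toAlgebra
  have halg : algebraMap RBMW FRB = phiBar := rfl
  haveI : IsFractionRing RBMW FRB := by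
    constructor
    constructor
    · rintro ⟨s, hs⟩
      have hs0 : s ≠ 0 := nonZeroDivisors.ne_zero hs
      have hps : phiBar s ≠ 0 := fun h => hs0 (phiBar_inj (by rw [h, map_zero]))
      rw [halg]
      exact hps.isUnit
    · intro z
      obtain ⟨⟨p, q⟩, hpq⟩ := IsLocalization.surj (nonZeroDivisors BaseRing) z
      have hq0 : (q : BaseRing) ≠ 0 := nonZeroDivisors.ne_zero q.2
      have hcq : canMap q ≠ 0 := fun h => hq0 (canMap_inj (by rw [h, map_zero]))
      refine ⟨⟨canMap p, ⟨canMap q, mem_nonZeroDivisors_of_ne_zero hcq⟩⟩, ?_⟩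
      simp only [halg]
      rw [phiBar_canMap, phiBar_canMap]
      exact hpq
    · intro x y h
      rw [halg] at h
      exact ⟨1, by rw [phiBar_inj h]⟩
  refine ⟨(FractionRing.algEquiv RBMW FRB).toRingEquiv, ?_⟩
  intro a
  have hc := (FractionRing.algEquiv RBMW FRB).commutes (canMap a)
  rw [AlgEquiv.toRingEquiv_eq_coe]
  simp only [AlgEquiv.coe_ringEquiv]
  rw [hc, halg, phiBar_canMap, aMap]
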